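/- Let x ∈ {-1,0,1}^N be a random vector with exactly ℓ nonzero entries almost surely (so xᵀx = ℓ a.s.), and let X = x xᵀ − E[x xᵀ]. Then for every integer k ≥ 1, E[X^k] ⪯ E[(x xᵀ)^k] = ℓ^{k−1} E[x xᵀ] in the positive semidefinite order. -/

import Mathlib

open MeasureTheory

/-- Entrywise expectation of a random matrix. -/
noncomputable def matExp {Ω : Type*} [MeasurableSpace Ω] (μ : Measure Ω) {N : ℕ}
    (f : Ω → Matrix (Fin N) (Fin N) ℝ) : Matrix (Fin N) (Fin N) ℝ :=
  Matrix.of fun i j => ∫ ω, f ω i j ∂μ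

/-- Outer product `x xᵀ`. -/
def outer {N : ℕ} (x : Fin N → ℝ) : Matrix (Fin N) (Fin N) ℝ :=
  Matrix.of fun i j => x i * x j

set_option linter.unusedSectionVars false
open Matrix

section AuxOuter

variable {N : ℕ}

lemma outer_isHermitian (y : Fin N → ℝ) : (outer y).IsHermitian := by
  ext i j; simp [Matrix.conjTranspose_apply, outer, mul_comm]

lemma dot_outer (y v : Fin N → ℝ) :
    v ⬝ᵥ ((outer y) *ᵥ v) = (∑ i, y i * v i) ^ 2 := by
  simp only [dotProduct, Matrix.mulVec, outer, Matrix.of_apply, sq,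
    Finset.mul_sum, Finset.sum_mul]
  rw [Finset.sum_comm]
  congr 1; ext i; congr 1; ext j; ring

lemma outer_posSemidef (y : Fin N → ℝ) : (outer y).PosSemidef := by
  refine Matrix.PosSemidef.of_dotProduct_mulVec_nonneg (outer_isHermitian y) fun v => ?_
  simpa [star_trivial, dot_outer] using sq_nonneg (∑ i, y i * v i)

lemma outer_mul_outer (y : Fin N → ℝ) :
    outer y * outer y = (∑ i, y i ^ 2) • outer y := by
  ext i j
  simp only [Matrix.mul_apply, outer, Matrix.of_apply, Matrix.smul_apply, smul_eq_mul,
    Finset.sum_mul, Finset.mul_sum]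
  congr 1; ext l; ring

lemma herm_smul_real {n : ℕ} {M : Matrix (Fin n) (Fin n) ℝ} (hM : M.IsHermitian) (c : ℝ) :
    (c • M).IsHermitian := by
  ext i j
  have h := congrFun (congrFun hM i) j
  simp only [Matrix.conjTranspose_apply, star_trivial] at h ⊢
  simp [Matrix.smul_apply, h]

lemma psd_smul {n : ℕ} {M : Matrix (Fin n) (Fin n) ℝ} (hM : M.PosSemidef) {c : ℝ} (hc : 0 ≤ c) :
    (c • M).PosSemidef := by
  refine Matrix.PosSemidef.of_dotProduct_mulVec_nonneg (herm_smul_real hM.1 c) fun v => ?_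
  have := hM.dotProduct_mulVec_nonneg v
  simpa [Matrix.smul_mulVec, dotProduct_smul] using
    mul_nonneg hc this

end AuxOuter

section AuxSpectral

variable {n : ℕ}

lemma eigbasis_dot_self {M : Matrix (Fin n) (Fin n) ℝ} (hM : M.IsHermitian) (i : Fin n) :
    (hM.eigenvectorBasis i : Fin n → ℝ) ⬝ᵥ (hM.eigenvectorBasis i : Fin n → ℝ) = 1 := by
  have h := hM.eigenvectorBasis.orthonormal.1 i
  have := @inner_self_eq_norm_sq_to_K ℝ _ _ _ _ (hM.eigenvectorBasis i)
  rw [EuclideanSpace.inner_eq_star_dotProduct] at this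
  simp [h] at this
  simpa [star_trivial] using this

lemma eig_abs_le {M : Matrix (Fin n) (Fin n) ℝ} (hM : M.IsHermitian) {c : ℝ}
    (h1 : ((c • 1 : Matrix (Fin n) (Fin n) ℝ) - M).PosSemidef)
    (h2 : ((c • 1 : Matrix (Fin n) (Fin n) ℝ) + M).PosSemidef) (i : Fin n) :
    |hM.eigenvalues i| ≤ c := by
  set v : Fin n → ℝ := (hM.eigenvectorBasis i : Fin n → ℝ) with hv
  have hvv : v ⬝ᵥ v = 1 := eigbasis_dot_self hM i
  have heig : hM.eigenvalues i = v ⬝ᵥ (M *ᵥ v) := by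
    simpa [star_trivial] using hM.eigenvalues_eq i
  have e1 := h1.dotProduct_mulVec_nonneg v
  have e2 := h2.dotProduct_mulVec_nonneg v
  rw [star_trivial] at e1 e2
  rw [Matrix.sub_mulVec] at e1
  rw [Matrix.add_mulVec] at e2
  simp only [Matrix.smul_mulVec, Matrix.one_mulVec, dotProduct_sub,
    dotProduct_add, dotProduct_smul, smul_eq_mul, hvv] at e1 e2
  rw [abs_le]
  constructor <;> [linarith [e2, heig]; linarith [e1, heig]]

lemma myconj_pow {U D : Matrix (Fin n) (Fin n) ℝ} (hU : U * star U = 1) (hU' : star U * U = 1)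
    (j : ℕ) : (U * D * star U) ^ j = U * D ^ j * star U := by
  induction j with
  | zero => simp [hU]
  | succ j ih =>
      rw [pow_succ, ih, pow_succ]
      calc U * D ^ j * star U * (U * D * star U)
          = U * (D ^ j * (star U * U * (D * star U))) := by simp only [mul_assoc]
        _ = U * (D ^ j * D) * star U := by rw [hU', one_mul]; simp only [mul_assoc]

lemma poly_psd {M : Matrix (Fin n) (Fin n) ℝ} (hM : M.IsHermitian) {c : ℝ}
    (hb : ∀ i, |hM.eigenvalues i| ≤ c) (m : ℕ) :
    (c ^ m • M ^ 2 - M ^ (m + 2)).PosSemidef := by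
  set U : Matrix (Fin n) (Fin n) ℝ := (hM.eigenvectorUnitary : Matrix (Fin n) (Fin n) ℝ) with hUdef
  have hU : U * star U = 1 := (Matrix.mem_unitaryGroup_iff).mp hM.eigenvectorUnitary.2
  have hU' : star U * U = 1 := (Matrix.mem_unitaryGroup_iff').mp hM.eigenvectorUnitary.2
  have hspec : M = U * Matrix.diagonal (RCLike.ofReal ∘ hM.eigenvalues) * star U :=
    hM.spectral_theorem
  have hDiag : (RCLike.ofReal ∘ hM.eigenvalues : Fin n → ℝ) = hM.eigenvalues := by
    ext i; simp
  rw [hDiag] at hspec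
  have key : ∀ j : ℕ, M ^ j = U * Matrix.diagonal (fun i => hM.eigenvalues i ^ j) * star U := by
    intro j
    conv_lhs => rw [hspec]
    rw [myconj_pow hU hU', Matrix.diagonal_pow]
    rfl
  have : c ^ m • M ^ 2 - M ^ (m + 2)
      = U * Matrix.diagonal (fun i => c ^ m * hM.eigenvalues i ^ 2 - hM.eigenvalues i ^ (m + 2))
        * star U := by
    rw [key 2, key (m + 2)]
    rw [← Matrix.smul_mul, ← Matrix.mul_smul, ← Matrix.sub_mul, ← Matrix.mul_sub,
      ← Matrix.diagonal_smul, ← Matrix.diagonal_sub]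
    rfl
  rw [this, Matrix.star_eq_conjTranspose]
  apply Matrix.PosSemidef.mul_mul_conjTranspose_same
  apply Matrix.PosSemidef.diagonal
  intro i
  have h1 : |hM.eigenvalues i| ≤ c := hb i
  have h0 : (0:ℝ) ≤ |hM.eigenvalues i| := abs_nonneg _
  have : hM.eigenvalues i ^ (m + 2) ≤ c ^ m * hM.eigenvalues i ^ 2 := by
    calc hM.eigenvalues i ^ (m + 2) ≤ |hM.eigenvalues i ^ (m + 2)| := le_abs_self _
      _ = |hM.eigenvalues i| ^ m * |hM.eigenvalues i| ^ 2 := by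
          rw [abs_pow, pow_add]
      _ ≤ c ^ m * |hM.eigenvalues i| ^ 2 := by
          apply mul_le_mul_of_nonneg_right (pow_le_pow_left₀ h0 h1 m) (by positivity)
      _ = c ^ m * hM.eigenvalues i ^ 2 := by rw [sq_abs]
  simpa using this

end AuxSpectral

section Toolkit
variable {Ω : Type*} [MeasurableSpace Ω] {μ : Measure Ω} [IsProbabilityMeasure μ] {N : ℕ}

def NiceM (f : Ω → Matrix (Fin N) (Fin N) ℝ) : Prop :=
  (∀ i j, Measurable fun ω => f ω i j) ∧ ∃ C : ℝ, ∀ ω i j, |f ω i j| ≤ C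

lemma NiceM.integrable {f : Ω → Matrix (Fin N) (Fin N) ℝ} (hf : NiceM f) (i j : Fin N) :
    Integrable (fun ω => f ω i j) μ := by
  obtain ⟨hm, C, hC⟩ := hf
  exact (integrable_const C).mono' ((hm i j).aestronglyMeasurable)
    (Filter.Eventually.of_forall fun ω => by simpa [Real.norm_eq_abs] using hC ω i j)

lemma NiceM.const (B : Matrix (Fin N) (Fin N) ℝ) : NiceM (fun _ : Ω => B) := by
  refine ⟨fun i j => measurable_const, ∑ i, ∑ j, |B i j|, fun ω i j => ?_⟩
  calc |B i j| ≤ ∑ j', |B i j'| :=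
        Finset.single_le_sum (f := fun j' => |B i j'|) (fun j' _ => abs_nonneg _)
          (Finset.mem_univ j)
    _ ≤ ∑ i', ∑ j', |B i' j'| :=
        Finset.single_le_sum (f := fun i' => ∑ j', |B i' j'|)
          (fun i' _ => Finset.sum_nonneg fun j' _ => abs_nonneg _) (Finset.mem_univ i)

lemma NiceM.sub {f g : Ω → Matrix (Fin N) (Fin N) ℝ} (hf : NiceM f) (hg : NiceM g) :
    NiceM (fun ω => f ω - g ω) := by
  obtain ⟨hfm, Cf, hCf⟩ := hf
  obtain ⟨hgm, Cg, hCg⟩ := hg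
  refine ⟨fun i j => ((hfm i j).sub (hgm i j)), Cf + Cg, fun ω i j => ?_⟩
  simp only [Matrix.sub_apply]
  exact (abs_sub _ _).trans (add_le_add (hCf ω i j) (hCg ω i j))

lemma NiceM.mul {f g : Ω → Matrix (Fin N) (Fin N) ℝ} (hf : NiceM f) (hg : NiceM g) :
    NiceM (fun ω => f ω * g ω) := by
  obtain ⟨hfm, Cf, hCf⟩ := hf
  obtain ⟨hgm, Cg, hCg⟩ := hg
  refine ⟨fun i j => ?_, N * (|Cf| * |Cg|), fun ω i j => ?_⟩
  · simp only [Matrix.mul_apply]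
    exact Finset.measurable_sum _ fun l _ => (hfm i l).mul (hgm l j)
  · simp only [Matrix.mul_apply]
    calc |∑ l, f ω i l * g ω l j| ≤ ∑ l, |f ω i l * g ω l j| := Finset.abs_sum_le_sum_abs _ _
      _ ≤ ∑ _l : Fin N, |Cf| * |Cg| := by
          refine Finset.sum_le_sum fun l _ => ?_
          rw [abs_mul]
          exact mul_le_mul ((hCf ω i l).trans (le_abs_self _))
            ((hCg ω l j).trans (le_abs_self _)) (abs_nonneg _) (abs_nonneg _)
      _ = N * (|Cf| * |Cg|) := by simp [mul_comm]

lemma NiceM.smul {f : Ω → Matrix (Fin N) (Fin N) ℝ} (hf : NiceM f) (c : ℝ) :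
    NiceM (fun ω => c • f ω) := by
  obtain ⟨hfm, Cf, hCf⟩ := hf
  refine ⟨fun i j => (hfm i j).const_mul c, |c| * |Cf|, fun ω i j => ?_⟩
  simp only [Matrix.smul_apply, smul_eq_mul, abs_mul]
  exact mul_le_mul_of_nonneg_left ((hCf ω i j).trans (le_abs_self _)) (abs_nonneg _)

lemma NiceM.pow {f : Ω → Matrix (Fin N) (Fin N) ℝ} (hf : NiceM f) (k : ℕ) :
    NiceM (fun ω => f ω ^ k) := by
  induction k with
  | zero => simpa using NiceM.const (1 : Matrix (Fin N) (Fin N) ℝ)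
  | succ k ih => simpa [pow_succ] using ih.mul hf

lemma matExp_smul (f : Ω → Matrix (Fin N) (Fin N) ℝ) (c : ℝ) :
    matExp μ (fun ω => c • f ω) = c • matExp μ f := by
  ext i j
  simp only [matExp, Matrix.of_apply, Matrix.smul_apply, smul_eq_mul]
  exact integral_const_mul c _

lemma matExp_const (B : Matrix (Fin N) (Fin N) ℝ) :
    matExp μ (fun _ => B) = B := by
  ext i j
  simp [matExp]

lemma matExp_sub {f g : Ω → Matrix (Fin N) (Fin N) ℝ} (hf : NiceM f) (hg : NiceM g) :
    matExp μ (fun ω => f ω - g ω) = matExp μ f - matExp μ g := by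
  ext i j
  simp only [matExp, Matrix.of_apply, Matrix.sub_apply]
  exact integral_sub (hf.integrable i j) (hg.integrable i j)

lemma matExp_mul_const {f : Ω → Matrix (Fin N) (Fin N) ℝ} (hf : NiceM f)
    (B : Matrix (Fin N) (Fin N) ℝ) :
    matExp μ (fun ω => f ω * B) = matExp μ f * B := by
  ext i j
  simp only [matExp, Matrix.of_apply, Matrix.mul_apply]
  rw [integral_finset_sum _ fun l _ => (hf.integrable i l).mul_const (B l j)]
  exact Finset.sum_congr rfl fun l _ => integral_mul_const _ _

lemma matExp_const_mul {f : Ω → Matrix (Fin N) (Fin N) ℝ} (hf : NiceM f)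
    (B : Matrix (Fin N) (Fin N) ℝ) :
    matExp μ (fun ω => B * f ω) = B * matExp μ f := by
  ext i j
  simp only [matExp, Matrix.of_apply, Matrix.mul_apply]
  rw [integral_finset_sum _ fun l _ => (hf.integrable l j).const_mul (B i l)]
  exact Finset.sum_congr rfl fun l _ => integral_const_mul _ _

lemma matExp_quadform {f : Ω → Matrix (Fin N) (Fin N) ℝ} (hf : NiceM f) (v : Fin N → ℝ) :
    v ⬝ᵥ ((matExp μ f) *ᵥ v) = ∫ ω, v ⬝ᵥ ((f ω) *ᵥ v) ∂μ := by
  have hint : ∀ i j, Integrable (fun ω => v i * (f ω i j * v j)) μ :=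
    fun i j => ((hf.integrable i j).mul_const (v j)).const_mul (v i)
  simp only [dotProduct, Matrix.mulVec, matExp, Matrix.of_apply, Finset.mul_sum]
  rw [integral_finset_sum _ fun i _ => integrable_finset_sum _ fun j _ => hint i j]
  refine Finset.sum_congr rfl fun i _ => ?_
  rw [integral_finset_sum _ fun j _ => hint i j]
  refine Finset.sum_congr rfl fun j _ => ?_
  rw [integral_const_mul, integral_mul_const]

lemma NiceM.integrable_quadform {f : Ω → Matrix (Fin N) (Fin N) ℝ} (hf : NiceM f)
    (v : Fin N → ℝ) : Integrable (fun ω => v ⬝ᵥ ((f ω) *ᵥ v)) μ := by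
  have : (fun ω => v ⬝ᵥ ((f ω) *ᵥ v)) = fun ω => ∑ i, ∑ j, v i * (f ω i j * v j) := by
    ext ω; simp [dotProduct, Matrix.mulVec, Finset.mul_sum]
  rw [this]
  exact integrable_finset_sum _ fun i _ => integrable_finset_sum _ fun j _ =>
    ((hf.integrable i j).mul_const (v j)).const_mul (v i)

lemma matExp_isHermitian {f : Ω → Matrix (Fin N) (Fin N) ℝ}
    (hH : ∀ ω, (f ω).IsHermitian) : (matExp μ f).IsHermitian := by
  ext i j
  simp only [Matrix.conjTranspose_apply, matExp, Matrix.of_apply, star_trivial]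
  congr 1
  ext ω
  have h := congrFun (congrFun (hH ω) i) j
  simpa [Matrix.conjTranspose_apply, star_trivial] using h

lemma matExp_psd {f : Ω → Matrix (Fin N) (Fin N) ℝ} (hf : NiceM f)
    (hH : ∀ ω, (f ω).PosSemidef) : (matExp μ f).PosSemidef := by
  refine Matrix.PosSemidef.of_dotProduct_mulVec_nonneg (matExp_isHermitian (fun ω => (hH ω).1)) fun v => ?_
  rw [star_trivial, matExp_quadform hf v]
  exact integral_nonneg fun ω => by simpa [star_trivial] using (hH ω).dotProduct_mulVec_nonneg v

end Toolkit

/-- If `x ∈ {-1,0,1}^N` has exactly `ℓ` nonzero entries almost surely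
(so `xᵀx = ℓ` a.s.), and `X = x xᵀ − E[x xᵀ]`, then for every `k ≥ 1`,
`E[X^k] ⪯ E[(x xᵀ)^k] = ℓ^{k−1} E[x xᵀ]` in the Loewner order. -/
theorem centered_outer_moment_bound {Ω : Type*} [MeasurableSpace Ω] (μ : Measure Ω)
    [IsProbabilityMeasure μ] {N ℓ : ℕ}
    (x : Ω → Fin N → ℝ)
    (hmeas : ∀ i, Measurable fun ω => x ω i)
    (hval : ∀ ω i, x ω i = -1 ∨ x ω i = 0 ∨ x ω i = 1)
    (hℓ : ∀ ω, ∑ i, x ω i ^ 2 = (ℓ : ℝ))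
    (Xbar : Matrix (Fin N) (Fin N) ℝ) (hXbar : Xbar = matExp μ (fun ω => outer (x ω)))
    (k : ℕ) (hk : 1 ≤ k) :
    (matExp μ (fun ω => (outer (x ω)) ^ k) - matExp μ (fun ω => (outer (x ω) - Xbar) ^ k)).PosSemidef
      ∧ matExp μ (fun ω => (outer (x ω)) ^ k) = (ℓ : ℝ) ^ (k - 1) • Xbar := by
  classical
  -- basic pointwise facts
  have habs : ∀ ω i, |x ω i| ≤ 1 := by
    intro ω i
    rcases hval ω i with h | h | h <;> rw [h] <;> norm_num
  have hA2 : ∀ ω, outer (x ω) * outer (x ω) = (ℓ : ℝ) • outer (x ω) := by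
    intro ω; rw [outer_mul_outer, hℓ]
  have hApow : ∀ (m : ℕ) ω, outer (x ω) ^ (m + 1) = ((ℓ : ℝ)) ^ m • outer (x ω) := by
    intro m
    induction m with
    | zero => intro ω; simp
    | succ m ih =>
        intro ω
        rw [pow_succ, ih ω, Matrix.smul_mul, hA2 ω, smul_smul, pow_succ]
  have NiceA : NiceM (fun ω => outer (x ω)) := by
    refine ⟨fun i j => (hmeas i).mul (hmeas j), 1, fun ω i j => ?_⟩
    have := mul_le_one₀ (habs ω i) (abs_nonneg _) (habs ω j)
    simpa [outer, abs_mul] using this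
  -- Part 2
  have part2 : matExp μ (fun ω => (outer (x ω)) ^ k) = (ℓ : ℝ) ^ (k - 1) • Xbar := by
    obtain ⟨m, rfl⟩ : ∃ m, k = m + 1 := ⟨k - 1, by omega⟩
    have : (fun ω => (outer (x ω)) ^ (m + 1)) = fun ω => ((ℓ : ℝ)) ^ m • outer (x ω) := by
      funext ω; exact hApow m ω
    rw [this, matExp_smul, ← hXbar]
    congr 1
  refine ⟨?_, part2⟩
  -- facts about Xbar
  have hBherm : Xbar.IsHermitian := by
    rw [hXbar]; exact matExp_isHermitian fun ω => outer_isHermitian (x ω)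
  have hBpsd : Xbar.PosSemidef := by
    rw [hXbar]; exact matExp_psd NiceA fun ω => outer_posSemidef (x ω)
  -- ℓ•1 - outer is psd pointwise (Cauchy-Schwarz)
  have hAle : ∀ ω, (((ℓ : ℝ) • 1 : Matrix (Fin N) (Fin N) ℝ) - outer (x ω)).PosSemidef := by
    intro ω
    refine Matrix.PosSemidef.of_dotProduct_mulVec_nonneg ((herm_smul_real Matrix.isHermitian_one _).sub (outer_isHermitian _)) fun v => ?_
    rw [star_trivial, Matrix.sub_mulVec]
    simp only [dotProduct_sub, Matrix.smul_mulVec, Matrix.one_mulVec,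
      dotProduct_smul, smul_eq_mul, dot_outer]
    have hcs := Finset.sum_mul_sq_le_sq_mul_sq Finset.univ (fun i => x ω i) v
    rw [hℓ ω] at hcs
    have hvv : v ⬝ᵥ v = ∑ i, v i ^ 2 := by
      simp [dotProduct, sq]
    rw [hvv]
    linarith [hcs]
  -- Xbar ⪯ ℓ•1
  have hBle : (((ℓ : ℝ) • 1 : Matrix (Fin N) (Fin N) ℝ) - Xbar).PosSemidef := by
    refine Matrix.PosSemidef.of_dotProduct_mulVec_nonneg ((herm_smul_real Matrix.isHermitian_one _).sub hBherm) fun v => ?_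
    rw [star_trivial, Matrix.sub_mulVec]
    simp only [dotProduct_sub, Matrix.smul_mulVec, Matrix.one_mulVec,
      dotProduct_smul, smul_eq_mul]
    have hq : v ⬝ᵥ (Xbar *ᵥ v) = ∫ ω, v ⬝ᵥ ((outer (x ω)) *ᵥ v) ∂μ := by
      rw [hXbar]; exact matExp_quadform NiceA v
    have hub : ∫ ω, v ⬝ᵥ ((outer (x ω)) *ᵥ v) ∂μ ≤ (ℓ : ℝ) * (v ⬝ᵥ v) := by
      have hmono : ∀ ω, v ⬝ᵥ ((outer (x ω)) *ᵥ v) ≤ (ℓ : ℝ) * (v ⬝ᵥ v) := by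
        intro ω
        have := (hAle ω).dotProduct_mulVec_nonneg v
        rw [star_trivial, Matrix.sub_mulVec] at this
        simp only [dotProduct_sub, Matrix.smul_mulVec, Matrix.one_mulVec,
          dotProduct_smul, smul_eq_mul] at this
        linarith
      calc ∫ ω, v ⬝ᵥ ((outer (x ω)) *ᵥ v) ∂μ
          ≤ ∫ _ω, (ℓ : ℝ) * (v ⬝ᵥ v) ∂μ :=
            integral_mono (NiceA.integrable_quadform v) (integrable_const _) hmono
        _ = (ℓ : ℝ) * (v ⬝ᵥ v) := by simp
    linarith [hq ▸ hub]
  -- pointwise facts about X = A - Xbar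
  have hXherm : ∀ ω, (outer (x ω) - Xbar).IsHermitian :=
    fun ω => (outer_isHermitian (x ω)).sub hBherm
  have heig : ∀ ω i, |(hXherm ω).eigenvalues i| ≤ (ℓ : ℝ) := by
    intro ω i
    apply eig_abs_le (hXherm ω)
    · have : ((ℓ : ℝ) • 1 : Matrix (Fin N) (Fin N) ℝ) - (outer (x ω) - Xbar)
        = (((ℓ : ℝ) • 1 : Matrix (Fin N) (Fin N) ℝ) - outer (x ω)) + Xbar := by
        ext i j; simp [Matrix.sub_apply, Matrix.add_apply]; ring
      rw [this]; exact (hAle ω).add hBpsd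
    · have : ((ℓ : ℝ) • 1 : Matrix (Fin N) (Fin N) ℝ) + (outer (x ω) - Xbar)
        = (((ℓ : ℝ) • 1 : Matrix (Fin N) (Fin N) ℝ) - Xbar) + outer (x ω) := by
        ext i j; simp [Matrix.sub_apply, Matrix.add_apply]; ring
      rw [this]; exact hBle.add (outer_posSemidef (x ω))
  have NiceX : NiceM (fun ω => outer (x ω) - Xbar) := NiceA.sub (NiceM.const Xbar)
  -- case split on k
  obtain ⟨m, rfl⟩ : ∃ m, k = m + 1 := ⟨k - 1, by omega⟩
  rcases Nat.eq_zero_or_pos m with rfl | hm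
  · -- k = 1
    have h1 : matExp μ (fun ω => (outer (x ω) - Xbar) ^ (0 + 1)) = 0 := by
      have : (fun ω => (outer (x ω) - Xbar) ^ (0 + 1)) = fun ω => outer (x ω) - Xbar := by
        funext ω; simp
      rw [this, matExp_sub NiceA (NiceM.const Xbar), matExp_const, ← hXbar, sub_self]
    rw [h1, sub_zero, part2]
    simpa using hBpsd
  · obtain ⟨m', rfl⟩ : ∃ m', m = m' + 1 := ⟨m - 1, by omega⟩
    set k := m' + 1 + 1 with hkdef
    -- E[X^2] = ℓ•Xbar - Xbar*Xbar
    have hX2 : matExp μ (fun ω => (outer (x ω) - Xbar) ^ 2)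
        = (ℓ : ℝ) • Xbar - Xbar * Xbar := by
      have hpt : (fun ω => (outer (x ω) - Xbar) ^ 2)
          = fun ω => ((ℓ : ℝ) • outer (x ω) - outer (x ω) * Xbar)
              - (Xbar * outer (x ω) - Xbar * Xbar) := by
        funext ω
        rw [sq, Matrix.sub_mul, Matrix.mul_sub, Matrix.mul_sub, hA2 ω]
      rw [hpt]
      have N1 : NiceM (fun ω => (ℓ : ℝ) • outer (x ω) - outer (x ω) * Xbar) :=
        (NiceA.smul _).sub (NiceA.mul (NiceM.const Xbar))
      have N2 : NiceM (fun ω => Xbar * outer (x ω) - Xbar * Xbar) :=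
        ((NiceM.const Xbar).mul NiceA).sub (NiceM.const (Xbar * Xbar))
      rw [matExp_sub N1 N2,
        matExp_sub (NiceA.smul _) (NiceA.mul (NiceM.const Xbar)),
        matExp_sub ((NiceM.const Xbar).mul NiceA) (NiceM.const (Xbar * Xbar)),
        matExp_smul, matExp_mul_const NiceA, matExp_const_mul NiceA, matExp_const, ← hXbar]
      abel
    -- pointwise PSD of ℓ^m'•X^2 - X^k
    have hptPSD : ∀ ω, (((ℓ : ℝ)) ^ m' • (outer (x ω) - Xbar) ^ 2
        - (outer (x ω) - Xbar) ^ (m' + 2)).PosSemidef :=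
      fun ω => poly_psd (hXherm ω) (heig ω) m'
    have NiceG : NiceM (fun ω => ((ℓ : ℝ)) ^ m' • (outer (x ω) - Xbar) ^ 2
        - (outer (x ω) - Xbar) ^ (m' + 2)) :=
      ((NiceX.pow 2).smul _).sub (NiceX.pow (m' + 2))
    have hG : (matExp μ (fun ω => ((ℓ : ℝ)) ^ m' • (outer (x ω) - Xbar) ^ 2
        - (outer (x ω) - Xbar) ^ (m' + 2))).PosSemidef := matExp_psd NiceG hptPSD
    have hGeq : matExp μ (fun ω => ((ℓ : ℝ)) ^ m' • (outer (x ω) - Xbar) ^ 2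
        - (outer (x ω) - Xbar) ^ (m' + 2))
        = ((ℓ : ℝ)) ^ m' • ((ℓ : ℝ) • Xbar - Xbar * Xbar)
          - matExp μ (fun ω => (outer (x ω) - Xbar) ^ (m' + 2)) := by
      rw [matExp_sub ((NiceX.pow 2).smul _) (NiceX.pow (m' + 2)), matExp_smul, hX2]
    have hBB : (((ℓ : ℝ)) ^ m' • (Xbar * Xbar)).PosSemidef := by
      apply psd_smul _ (by positivity)
      have : Xbar * Xbar = Xbar * Xbarᴴ := by rw [hBherm]
      rw [this]
      exact Matrix.posSemidef_self_mul_conjTranspose Xbar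
    -- assemble
    have hfinal : matExp μ (fun ω => (outer (x ω)) ^ k)
        - matExp μ (fun ω => (outer (x ω) - Xbar) ^ k)
        = matExp μ (fun ω => ((ℓ : ℝ)) ^ m' • (outer (x ω) - Xbar) ^ 2
            - (outer (x ω) - Xbar) ^ (m' + 2))
          + ((ℓ : ℝ)) ^ m' • (Xbar * Xbar) := by
      rw [hGeq, part2]
      have hkm : k - 1 = m' + 1 := by omega
      have hkm2 : k = m' + 2 := by omega
      rw [hkm, hkm2, pow_succ, smul_sub, smul_smul]
      abel
    rw [hfinal]
    exact hG.add hBB
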